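/- Let n be a positive integer and k an integer with 1 ≤ k < 2^n, and set q = k/2^n. For the logistic map sequence defined by x_{j+1} = 3.71·x_j·(1 − x_j) with initial value x_0 = q² = k²/4^n, there exists an integer m with 0 ≤ m ≤ 2n such that x_m > 1/2. -/
import Mathlib


/-- For `q = k/2^n` with `1 ≤ k < 2^n`, the logistic map sequence
`x_{j+1} = 3.71 * x_j * (1 - x j)` with initial value `x_0 = q² = k²/4^n` reaches a value
greater than `1/2` within `2n` steps. -/
theorem logistic_map_amplification_general (n : ℕ) (hn : 0 < n) (k : ℕ)
    (hk1 : 1 ≤ k) (hk2 : k < 2 ^ n) (x : ℕ → ℝ)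
    (h0 : x 0 = (k : ℝ) ^ 2 / 4 ^ n)
    (hrec : ∀ j, x (j + 1) = 3.71 * x j * (1 - x j)) :
    ∃ m : ℕ, m ≤ 2 * n ∧ x m > 1 / 2 := by
  by_contra hcon
  push_neg at hcon
  have hkR : (1:ℝ) ≤ (k:ℝ) := by exact_mod_cast hk1
  have h4 : (0:ℝ) < 4 ^ n := by positivity
  have hx0 : 0 < x 0 := by
    rw [h0]; apply div_pos _ h4; nlinarith
  by_cases hbig : ∃ j, j < 2 * n ∧ x j > 171 / 371
  · obtain ⟨j, hj, hxj⟩ := hbig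
    have h1 := hcon j (by omega)
    have h2 := hcon (j + 1) (by omega)
    rw [hrec j] at h2
    nlinarith
  · push_neg at hbig
    have key : ∀ j, j ≤ 2 * n → 2 ^ j * x 0 ≤ x j := by
      intro j
      induction j with
      | zero => intro _; simp
      | succ j ih =>
        intro hj
        have hxj := ih (by omega)
        have hs : x j ≤ 171 / 371 := hbig j (by omega)
        have hpos : 0 < x j := lt_of_lt_of_le (by positivity) hxj
        rw [hrec j, pow_succ]
        nlinarith
    have h2n := key (2 * n) le_rfl
    have hle := hcon (2 * n) le_rfl
    have heq : (2:ℝ) ^ (2 * n) * x 0 = (k:ℝ) ^ 2 := by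
      rw [h0, pow_mul]
      norm_num
      field_simp
    nlinarith
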